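/- Let M and X be metric spaces with M having at least 3 points, and let R and R' be correspondences between M and X with dis R < min{ s(M)/2, e(M)/2 } and dis R' < min{ s(M)/2, e(M)/2 }. Then R = R' (as subsets of M × X). -/

import Mathlib

open scoped ENNReal

/-- A correspondence between `X` and `Y`: a relation such that both projections are
surjective on it. -/
def IsCorrespondence {X Y : Type*} (R : Set (X × Y)) : Prop :=
  (∀ x : X, ∃ y : Y, (x, y) ∈ R) ∧ ∀ y : Y, ∃ x : X, (x, y) ∈ R

/-- The distortion of a relation between two metric spaces, with values in `[0,∞]`. -/
noncomputable def relDis {X Y : Type*} [MetricSpace X] [MetricSpace Y]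
    (σ : Set (X × Y)) : ℝ≥0∞ :=
  ⨆ (p ∈ σ) (q ∈ σ), ENNReal.ofReal |dist (Prod.fst p) (Prod.fst q) -
    dist (Prod.snd p) (Prod.snd q)|

/-- `s(M)`: the infimum of distances between distinct points of `M`. -/
noncomputable def sSpec (M : Type*) [MetricSpace M] : ℝ≥0∞ :=
  ⨅ (x : M) (y : M) (_ : x ≠ y), edist x y

/-- The distortion of a self-map of a metric space, with values in `[0,∞]`. -/
noncomputable def mapDis {M : Type*} [MetricSpace M] (f : M → M) : ℝ≥0∞ :=
  ⨆ (x : M) (y : M), ENNReal.ofReal |dist x y - dist (f x) (f y)|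

/-- `e(M)`: the infimum of distortions of non-identity bijections of `M`. -/
noncomputable def eSpec (M : Type*) [MetricSpace M] : ℝ≥0∞ :=
  ⨅ (f : M ≃ M) (_ : f ≠ Equiv.refl M), mapDis (f : M → M)

/-- `t(M)`: the infimum of the triangle inequality defects over triples of pairwise
distinct points of `M`. -/
noncomputable def tSpec (M : Type*) [MetricSpace M] : ℝ≥0∞ :=
  ⨅ (x : M) (y : M) (z : M) (_ : x ≠ y) (_ : y ≠ z) (_ : x ≠ z),
    ENNReal.ofReal (dist x y + dist y z - dist x z)

theorem relDis_le' {X Y : Type*} [MetricSpace X] [MetricSpace Y]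
    (σ : Set (X × Y)) {p q : X × Y} (hp : p ∈ σ) (hq : q ∈ σ) :
    ENNReal.ofReal |dist p.1 q.1 - dist p.2 q.2| ≤ relDis σ := by
  unfold relDis
  exact le_iSup₂_of_le p hp (le_iSup₂_of_le q hq le_rfl)

theorem edist_fst_le' {X Y : Type*} [MetricSpace X] [MetricSpace Y]
    (σ : Set (X × Y)) {p q : X × Y} (hp : p ∈ σ) (hq : q ∈ σ) :
    edist p.1 q.1 ≤ edist p.2 q.2 + relDis σ := by
  have h := relDis_le' σ hp hq
  rw [edist_dist, edist_dist]
  calc ENNReal.ofReal (dist p.1 q.1)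
      ≤ ENNReal.ofReal (dist p.2 q.2 + |dist p.1 q.1 - dist p.2 q.2|) := by
        apply ENNReal.ofReal_le_ofReal
        have := le_abs_self (dist p.1 q.1 - dist p.2 q.2); linarith
    _ ≤ ENNReal.ofReal (dist p.2 q.2) + ENNReal.ofReal |dist p.1 q.1 - dist p.2 q.2| :=
        ENNReal.ofReal_add_le
    _ ≤ ENNReal.ofReal (dist p.2 q.2) + relDis σ := add_le_add le_rfl h

theorem edist_snd_le' {X Y : Type*} [MetricSpace X] [MetricSpace Y]
    (σ : Set (X × Y)) {p q : X × Y} (hp : p ∈ σ) (hq : q ∈ σ) :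
    edist p.2 q.2 ≤ edist p.1 q.1 + relDis σ := by
  have h := relDis_le' σ hp hq
  rw [abs_sub_comm] at h
  rw [edist_dist, edist_dist]
  calc ENNReal.ofReal (dist p.2 q.2)
      ≤ ENNReal.ofReal (dist p.1 q.1 + |dist p.2 q.2 - dist p.1 q.1|) := by
        apply ENNReal.ofReal_le_ofReal
        have := le_abs_self (dist p.2 q.2 - dist p.1 q.1); linarith
    _ ≤ ENNReal.ofReal (dist p.1 q.1) + ENNReal.ofReal |dist p.2 q.2 - dist p.1 q.1| :=
        ENNReal.ofReal_add_le
    _ ≤ ENNReal.ofReal (dist p.1 q.1) + relDis σ := add_le_add le_rfl h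

theorem sSpec_le' {M : Type*} [MetricSpace M] {x y : M} (h : x ≠ y) :
    sSpec M ≤ edist x y := by
  unfold sSpec
  exact iInf_le_of_le x (iInf_le_of_le y (iInf_le _ h))

/-- If two pairs of a small-distortion relation have close second coordinates, the
first coordinates coincide. -/
theorem close_of_small {M X : Type*} [MetricSpace M] [MetricSpace X]
    (S : Set (M × X)) (hS : relDis S < sSpec M / 2) {a b : M} {x y : X}
    (ha : (a, x) ∈ S) (hb : (b, y) ∈ S) (hxy : edist x y < sSpec M / 2) : a = b := by
  by_contra hne
  have h1 : sSpec M ≤ edist a b := sSpec_le' hne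
  have h2 : edist a b ≤ edist x y + relDis S :=
    edist_fst_le' S (p := (a, x)) (q := (b, y)) ha hb
  have h3 : edist x y + relDis S < sSpec M :=
    (ENNReal.add_lt_add hxy hS).trans_le (ENNReal.add_halves _).le
  exact absurd ((h1.trans h2).trans_lt h3) (lt_irrefl _)

theorem corr_subset {M X : Type*} [MetricSpace M] [MetricSpace X]
    (R R' : Set (M × X)) (hR : IsCorrespondence R) (hR' : IsCorrespondence R')
    (hdis : relDis R < min (sSpec M / 2) (eSpec M / 2))
    (hdis' : relDis R' < min (sSpec M / 2) (eSpec M / 2)) :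
    R ⊆ R' := by
  have hDs : relDis R < sSpec M / 2 := hdis.trans_le (min_le_left _ _)
  have hDe : relDis R < eSpec M / 2 := hdis.trans_le (min_le_right _ _)
  have hD's : relDis R' < sSpec M / 2 := hdis'.trans_le (min_le_left _ _)
  have hD'e : relDis R' < eSpec M / 2 := hdis'.trans_le (min_le_right _ _)
  obtain ⟨f, hf⟩ : ∃ f : M → X, ∀ m, (m, f m) ∈ R :=
    ⟨fun m => (hR.1 m).choose, fun m => (hR.1 m).choose_spec⟩
  obtain ⟨g, hg⟩ : ∃ g : X → M, ∀ x, (g x, x) ∈ R' :=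
    ⟨fun x => (hR'.2 x).choose, fun x => (hR'.2 x).choose_spec⟩
  -- two R-partners of the same point of M are within relDis R
  have hnear : ∀ (m : M) (x : X), (m, x) ∈ R → edist x (f m) ≤ relDis R := by
    intro m x hx
    have := edist_snd_le' R (p := (m, x)) (q := (m, f m)) hx (hf m)
    simpa using this
  -- distortion bound for g ∘ f
  have hmap : mapDis (g ∘ f) ≤ relDis R + relDis R' := by
    apply iSup₂_le
    intro m m'
    have h1 := relDis_le' R (p := (m, f m)) (q := (m', f m')) (hf m) (hf m')
    have h2 := relDis_le' R' (p := (g (f m), f m)) (q := (g (f m'), f m'))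
      (hg (f m)) (hg (f m'))
    simp only [Function.comp]
    calc ENNReal.ofReal |dist m m' - dist (g (f m)) (g (f m'))|
        ≤ ENNReal.ofReal (|dist m m' - dist (f m) (f m')| +
            |dist (f m) (f m') - dist (g (f m)) (g (f m'))|) := by
          apply ENNReal.ofReal_le_ofReal
          exact abs_sub_le _ _ _
      _ ≤ ENNReal.ofReal |dist m m' - dist (f m) (f m')| +
            ENNReal.ofReal |dist (f m) (f m') - dist (g (f m)) (g (f m'))| :=
          ENNReal.ofReal_add_le
      _ ≤ relDis R + relDis R' := by
          refine add_le_add h1 ?_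
          rw [abs_sub_comm]
          exact h2
  have hinj : Function.Injective (g ∘ f) := by
    intro m m' h
    have hb : edist (f m) (f m') ≤ relDis R' := by
      have := edist_snd_le' R' (p := (g (f m), f m)) (q := (g (f m'), f m'))
        (hg (f m)) (hg (f m'))
      simp only [Function.comp] at h
      rw [h] at this
      simpa using this
    exact close_of_small R hDs (hf m) (hf m') (hb.trans_lt hD's)
  have hsurj : Function.Surjective (g ∘ f) := by
    intro m'
    obtain ⟨x', hx'⟩ := hR'.1 m'
    obtain ⟨m, hm⟩ := hR.2 x'
    refine ⟨m, ?_⟩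
    have hb : edist (f m) x' ≤ relDis R := by
      rw [edist_comm]; exact hnear m x' hm
    exact close_of_small R' hD's (hg (f m)) hx' (hb.trans_lt hDs)
  have hid : ∀ m, g (f m) = m := by
    by_contra h
    push_neg at h
    obtain ⟨m0, hm0⟩ := h
    set e : M ≃ M := Equiv.ofBijective (g ∘ f) ⟨hinj, hsurj⟩ with he
    have hne : e ≠ Equiv.refl M := by
      intro hcontra
      apply hm0
      have : e m0 = m0 := by rw [hcontra]; rfl
      exact this
    have h1 : eSpec M ≤ mapDis (e : M → M) := by
      unfold eSpec
      exact iInf_le_of_le e (iInf_le _ hne)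
    have hcoe : (e : M → M) = g ∘ f := rfl
    rw [hcoe] at h1
    have h2 : relDis R + relDis R' < eSpec M :=
      (ENNReal.add_lt_add hDe hD'e).trans_le (ENNReal.add_halves _).le
    exact absurd ((h1.trans hmap).trans_lt h2) (lt_irrefl _)
  rintro ⟨m, x⟩ hmx
  have hgx : g x = m := by
    have h1 : edist x (f m) ≤ relDis R := hnear m x hmx
    have := close_of_small R' hD's (hg x) (hg (f m)) (h1.trans_lt hDs)
    rw [this, hid m]
  have := hg x
  rwa [hgx] at this

/-- If `M` has at least 3 points and `R`, `R'` are correspondences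
between `M` and `X` with distortions `< min (s(M)/2) (e(M)/2)`, then `R = R'`. -/
theorem correspondence_unique {M X : Type*} [MetricSpace M] [MetricSpace X]
    (h3 : 3 ≤ Cardinal.mk M)
    (R R' : Set (M × X)) (hR : IsCorrespondence R) (hR' : IsCorrespondence R')
    (hdis : relDis R < min (sSpec M / 2) (eSpec M / 2))
    (hdis' : relDis R' < min (sSpec M / 2) (eSpec M / 2)) :
    R = R' :=
  Set.Subset.antisymm (corr_subset R R' hR hR' hdis hdis')
    (corr_subset R' R hR' hR hdis' hdis)
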